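/- The symmetric profile with every agent demanding C/n is a Nash equilibrium of the SWA-induced game when λ ≥ (n-β)/(n-1), 1 < β ≤ n, n ≥ 2, and C/n ≤ x_max: no unilateral deviation in [0, x_max] increases U_i^λ. Deviating downward loses the positive per-unit gain in the non-overloaded regime (where ∂U_i^λ/∂x_i = (1-λ) + λ/n > 0), and deviating upward is non-profitable since the overloaded slope g(λ) ≤ 0. -/
import Mathlib


/-- The symmetric profile with every agent demanding `C/n` is a Nash equilibrium
of the SWA-induced game when `λ ≥ (n-β)/(n-1)`, `1 < β ≤ n`, `n ≥ 2`,
`C/n ≤ x_max`: no unilateral deviation `xᵢ ∈ [0, x_max]` increases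
`U_i^λ(xᵢ) = (1-λ)[xᵢ - (β/n)max(0, X-C)] + (λ/n)[X - β·max(0, X-C)]`,
where `X = (n-1)·(C/n) + xᵢ`. -/
theorem stmt_15 (n : ℕ) (hn : 2 ≤ n) (β C xmax lam : ℝ) (hC : 0 < C)
    (hβ1 : 1 < β) (hβn : β ≤ n) (hxm : C / n ≤ xmax)
    (hlam1 : lam ≤ 1) (hlam : ((n : ℝ) - β) / (n - 1) ≤ lam) :
    ∀ xi ∈ Set.Icc (0 : ℝ) xmax,
      ((1 - lam) * (xi - (β / n) *
          max 0 ((((n : ℝ) - 1) * (C / n) + xi) - C)) +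
        (lam / n) * ((((n : ℝ) - 1) * (C / n) + xi)
          - β * max 0 ((((n : ℝ) - 1) * (C / n) + xi) - C)))
      ≤
      ((1 - lam) * (C / n - (β / n) *
          max 0 ((((n : ℝ) - 1) * (C / n) + C / n) - C)) +
        (lam / n) * ((((n : ℝ) - 1) * (C / n) + C / n)
          - β * max 0 ((((n : ℝ) - 1) * (C / n) + C / n) - C))) := by
  intro xi hxi
  have hn2 : (2:ℝ) ≤ (n:ℝ) := by exact_mod_cast hn
  have hn0 : (0:ℝ) < (n:ℝ) := by linarith
  have hne : (n:ℝ) ≠ 0 := ne_of_gt hn0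
  have hn1 : (0:ℝ) < (n:ℝ) - 1 := by linarith
  have hkey : (((n : ℝ) - 1) * (C / n) + xi) - C = xi - C / n := by
    field_simp; ring
  have hkey2 : (((n : ℝ) - 1) * (C / n) + C / n) - C = 0 := by
    field_simp; ring
  have hlam' : (n:ℝ) - β ≤ lam * ((n:ℝ) - 1) := by
    have := (div_le_iff₀ hn1).mp hlam
    linarith
  have hlam0 : 0 ≤ lam := by
    nlinarith
  rw [hkey, hkey2]
  simp only [max_self, max_eq_left (le_refl (0:ℝ))]
  rcases le_or_gt xi (C / n) with h | h
  · have hm : max 0 (xi - C / n) = 0 := max_eq_left (by linarith)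
    rw [hm]
    have h1 : 0 ≤ ((1 - lam) + lam / n) * (C / n - xi) := by
      apply mul_nonneg
      · have : 0 ≤ lam / n := div_nonneg hlam0 (le_of_lt hn0)
        linarith
      · linarith
    have h2 : lam / n * (((n:ℝ) - 1) * (C / n) + C / n) - lam / n * (((n:ℝ) - 1) * (C / n) + xi) = lam / n * (C / n - xi) := by ring
    nlinarith [div_nonneg hlam0 (le_of_lt hn0)]
  · have hm : max 0 (xi - C / n) = xi - C / n := max_eq_right (by linarith)
    rw [hm]
    -- difference = t * g(lam) with t = xi - C/n ≥ 0, g ≤ 0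
    have ht : 0 ≤ xi - C / n := by linarith
    have hg : (1 - lam) * (1 - β / n) + (lam / n) * (1 - β) ≤ 0 := by
      have heq : (1 - lam) * (1 - β / n) + (lam / n) * (1 - β)
          = ((1 - lam) * ((n:ℝ) - β) + lam * (1 - β)) / n := by
        field_simp
      rw [heq]
      apply div_nonpos_of_nonpos_of_nonneg _ (le_of_lt hn0)
      nlinarith
    nlinarith [mul_nonpos_of_nonneg_of_nonpos ht hg]
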